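/- The series ∑_{n=1}^∞ (1/4^n) * C(2n,n) * H_n / n equals 2ζ(2), where H_n = ∑_{k=1}^n 1/k. -/

import Mathlib

open Real Finset

/-- Real zeta value ζ(k) = ∑_{n≥1} 1/n^k. -/
noncomputable def zval (k : ℕ) : ℝ := ∑' n : ℕ, 1 / ((n : ℝ) + 1) ^ k

/-- Li₄(1/2) = ∑_{k≥1} (1/2)^k / k^4. -/
noncomputable def Li4half : ℝ := ∑' n : ℕ, (1 / 2 : ℝ) ^ (n + 1) / ((n : ℝ) + 1) ^ 4

/-- Harmonic number H_n = ∑_{k=1}^n 1/k. -/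
noncomputable def H (n : ℕ) : ℝ := ∑ k ∈ Finset.range n, 1 / ((k : ℝ) + 1)

/-- Generalized harmonic number H_n^{(2)} = ∑_{k=1}^n 1/k². -/
noncomputable def H2 (n : ℕ) : ℝ := ∑ k ∈ Finset.range n, 1 / ((k : ℝ) + 1) ^ 2

/-- Odd harmonic number O_n = ∑_{k=1}^n 1/(2k-1). -/
noncomputable def Oh (n : ℕ) : ℝ := ∑ k ∈ Finset.range n, 1 / (2 * (k : ℝ) + 1)


open Filter Topology

noncomputable def cb (n : ℕ) : ℝ := ∏ j ∈ Finset.range n, (2*(j:ℝ)+1)/(2*(j:ℝ)+2)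

noncomputable def Jf (m k : ℕ) : ℝ :=
  (1/(2*(m:ℝ)+1)) * ∏ i ∈ Finset.range k, (2*(i:ℝ)+2)/(2*(m:ℝ)+2*(i:ℝ)+3)

lemma cb_zero : cb 0 = 1 := by simp [cb]

lemma cb_succ (n : ℕ) : cb (n+1) = cb n * ((2*(n:ℝ)+1)/(2*(n:ℝ)+2)) := by
  rw [cb, Finset.prod_range_succ, ← cb]

lemma cb_pos (n : ℕ) : 0 < cb n := by
  induction n with
  | zero => simp [cb_zero]
  | succ n ih => rw [cb_succ]; positivity

lemma cb_anti (n : ℕ) : cb (n+1) ≤ cb n := by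
  rw [cb_succ]
  have h := cb_pos n
  have h2 : (0:ℝ) < 2*(n:ℝ)+2 := by positivity
  rw [mul_div_assoc', div_le_iff₀ h2]
  nlinarith

lemma cb_sq (n : ℕ) : (cb n)^2 * (2*(n:ℝ)+1) ≤ 1 := by
  induction n with
  | zero => simp [cb_zero]
  | succ n ih =>
    rw [cb_succ]
    have h := cb_pos n
    have h2 : (0:ℝ) < 2*(n:ℝ)+2 := by positivity
    have key : cb n ^ 2 * ((2 * (n:ℝ) + 1) / (2 * (n:ℝ) + 2)) ^ 2 * (2 * ((n:ℝ)+1) + 1)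
        = (cb n ^ 2 * (2*(n:ℝ)+1)) * ((2*(n:ℝ)+1) * (2*(n:ℝ)+3) / (2*(n:ℝ)+2)^2) := by
      field_simp; ring
    push_cast
    rw [mul_pow, key]
    have hle : (2*(n:ℝ)+1) * (2*(n:ℝ)+3) / (2*(n:ℝ)+2)^2 ≤ 1 := by
      rw [div_le_one (by positivity)]; nlinarith
    have hnn : (0:ℝ) ≤ (2*(n:ℝ)+1) * (2*(n:ℝ)+3) / (2*(n:ℝ)+2)^2 := by positivity
    exact mul_le_one₀ ih hnn hle

lemma cb_le (n : ℕ) : cb n ≤ 1 / Real.sqrt (2*(n:ℝ)+1) := by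
  have h1 : (0:ℝ) < 2*(n:ℝ)+1 := by positivity
  have hs : 0 < Real.sqrt (2*(n:ℝ)+1) := Real.sqrt_pos.2 h1
  rw [le_div_iff₀ hs]
  have : (cb n * Real.sqrt (2*(n:ℝ)+1))^2 ≤ 1 := by
    rw [mul_pow, Real.sq_sqrt h1.le]
    exact cb_sq n
  nlinarith [mul_pos (cb_pos n) hs, this]

lemma cb_tendsto : Tendsto cb atTop (𝓝 0) := by
  have h2 : Tendsto (fun n : ℕ => (2*(n:ℝ)+1)) atTop atTop := by
    apply Filter.tendsto_atTop_add_const_right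
    exact (tendsto_natCast_atTop_atTop (R := ℝ)).const_mul_atTop (by norm_num)
  have hsq : Tendsto (fun n : ℕ => (cb n)^2) atTop (𝓝 0) := by
    apply squeeze_zero (fun n => by positivity) (g := fun n : ℕ => 1/(2*(n:ℝ)+1))
    · intro n
      have h1 : (0:ℝ) < 2*(n:ℝ)+1 := by positivity
      rw [le_div_iff₀ h1]
      exact cb_sq n
    · exact tendsto_const_nhds.div_atTop h2
  have : Tendsto (fun n : ℕ => Real.sqrt ((cb n)^2)) atTop (𝓝 (Real.sqrt 0)) :=
    (Real.continuous_sqrt.tendsto 0).comp hsq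
  simpa [Real.sqrt_sq (cb_pos _).le] using this
section JPART
open Real Finset Filter Topology

lemma Jf_zero (m : ℕ) : Jf m 0 = 1/(2*(m:ℝ)+1) := by simp [Jf]

lemma Jf_succ (m k : ℕ) : Jf m (k+1) = Jf m k * ((2*(k:ℝ)+2)/(2*(m:ℝ)+2*(k:ℝ)+3)) := by
  rw [Jf, Finset.prod_range_succ, ← mul_assoc, ← Jf]

lemma Jf_pos (m k : ℕ) : 0 < Jf m k := by
  induction k with
  | zero => rw [Jf_zero]; positivity
  | succ k ih => rw [Jf_succ]; positivity

lemma Jf_anti_k (m k : ℕ) : Jf m (k+1) ≤ Jf m k := by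
  rw [Jf_succ]
  have h := Jf_pos m k
  have h2 : (0:ℝ) < 2*(m:ℝ)+2*(k:ℝ)+3 := by positivity
  rw [mul_div_assoc', div_le_iff₀ h2]
  nlinarith [Jf_pos m k, Nat.cast_nonneg (α := ℝ) m]

lemma Jf_shift (m k : ℕ) : Jf (m+1) k = Jf m k * ((2*(m:ℝ)+1)/(2*(m:ℝ)+2*(k:ℝ)+3)) := by
  induction k with
  | zero =>
    rw [Jf_zero, Jf_zero]
    have h1 : (2*(m:ℝ)+1) ≠ 0 := by positivity
    have h2 : (2*(m:ℝ)+3) ≠ 0 := by positivity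
    push_cast
    field_simp
    ring
  | succ k ih =>
    rw [Jf_succ, Jf_succ, ih]
    have h1 : (2*(m:ℝ)+2*(k:ℝ)+3) ≠ 0 := by positivity
    have h2 : (2*(m:ℝ)+2*(k:ℝ)+5) ≠ 0 := by positivity
    push_cast
    field_simp
    ring

lemma Jf_tele_m (m k : ℕ) : Jf m (k+1) = Jf m k - Jf (m+1) k := by
  rw [Jf_succ, Jf_shift]
  have h1 : (2*(m:ℝ)+2*(k:ℝ)+3) ≠ 0 := by positivity
  field_simp
  ring

lemma Jf_anti_m (m k : ℕ) : Jf (m+1) k ≤ Jf m k := by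
  have := Jf_tele_m m k
  nlinarith [Jf_pos m (k+1)]

lemma Jf_le_inv (m k : ℕ) : Jf m k ≤ 1/(2*(m:ℝ)+1) := by
  induction k with
  | zero => rw [Jf_zero]
  | succ k ih => exact le_trans (Jf_anti_k m k) ih

lemma Jf_le_Jf0 (m k : ℕ) : Jf m k ≤ Jf 0 k := by
  induction m with
  | zero => exact le_refl _
  | succ m ih => exact le_trans (Jf_anti_m m k) ih

lemma Jf0_sq (k : ℕ) : (Jf 0 k)^2 * ((k:ℝ)+1) ≤ 1 := by
  induction k with
  | zero => simp [Jf_zero]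
  | succ k ih =>
    rw [Jf_succ]
    have h := Jf_pos 0 k
    have key : (Jf 0 k * ((2*(k:ℝ)+2)/(2*(0:ℕ)+2*(k:ℝ)+3)))^2 * ((k:ℝ)+1+1)
        = ((Jf 0 k)^2 * ((k:ℝ)+1)) * ((2*(k:ℝ)+2)^2*((k:ℝ)+2)/(((k:ℝ)+1)*(2*(k:ℝ)+3)^2)) := by
      push_cast
      field_simp
      ring
    push_cast at key ⊢
    rw [key]
    have hle : (2*(k:ℝ)+2)^2*((k:ℝ)+2)/(((k:ℝ)+1)*(2*(k:ℝ)+3)^2) ≤ 1 := by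
      rw [div_le_one (by positivity)]
      nlinarith [Nat.cast_nonneg (α := ℝ) k]
    have hnn : (0:ℝ) ≤ (2*(k:ℝ)+2)^2*((k:ℝ)+2)/(((k:ℝ)+1)*(2*(k:ℝ)+3)^2) := by positivity
    exact mul_le_one₀ ih hnn hle

lemma Jf0_tendsto : Tendsto (fun k => Jf 0 k) atTop (𝓝 0) := by
  have h2 : Tendsto (fun k : ℕ => ((k:ℝ)+1)) atTop atTop := by
    apply Filter.tendsto_atTop_add_const_right
    exact tendsto_natCast_atTop_atTop (R := ℝ)
  have hsq : Tendsto (fun k : ℕ => (Jf 0 k)^2) atTop (𝓝 0) := by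
    apply squeeze_zero (fun k => by positivity) (g := fun k : ℕ => 1/((k:ℝ)+1))
    · intro k
      have h1 : (0:ℝ) < (k:ℝ)+1 := by positivity
      rw [le_div_iff₀ h1]
      exact Jf0_sq k
    · exact tendsto_const_nhds.div_atTop h2
  have : Tendsto (fun k : ℕ => Real.sqrt ((Jf 0 k)^2)) atTop (𝓝 (Real.sqrt 0)) :=
    (Real.continuous_sqrt.tendsto 0).comp hsq
  simpa [Real.sqrt_sq (Jf_pos _ _).le] using this

lemma Jf_tendsto_k (m : ℕ) : Tendsto (fun k => Jf m k) atTop (𝓝 0) :=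
  squeeze_zero (fun k => (Jf_pos m k).le) (fun k => Jf_le_Jf0 m k) Jf0_tendsto

lemma Jf_tendsto_m (k : ℕ) : Tendsto (fun m => Jf m k) atTop (𝓝 0) := by
  have h2 : Tendsto (fun m : ℕ => (2*(m:ℝ)+1)) atTop atTop := by
    apply Filter.tendsto_atTop_add_const_right
    exact (tendsto_natCast_atTop_atTop (R := ℝ)).const_mul_atTop (by norm_num)
  exact squeeze_zero (fun m => (Jf_pos m k).le) (fun m => Jf_le_inv m k)
    (tendsto_const_nhds.div_atTop h2)

lemma Jf0_eq (k : ℕ) : Jf 0 k = 1/(2*((k:ℝ)+1)*cb (k+1)) := by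
  induction k with
  | zero =>
    rw [Jf_zero]
    have hc1 : cb 1 = 1/2 := by rw [cb_succ, cb_zero]; norm_num
    norm_num [hc1]
  | succ k ih =>
    rw [Jf_succ, ih, cb_succ (k+1)]
    have h1 := cb_pos (k+1)
    have hne := ne_of_gt h1
    push_cast
    field_simp
    ring

end JPART
section TELE
open Real Finset Filter Topology

lemma hasSum_telescope {g : ℕ → ℝ} (hmono : ∀ n, g (n+1) ≤ g n) (hnn : ∀ n, 0 ≤ g n)
    (hL : Tendsto g atTop (𝓝 0)) : HasSum (fun n => g n - g (n+1)) (g 0) := by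
  have hnneg : ∀ n, 0 ≤ g n - g (n+1) := fun n => sub_nonneg.2 (hmono n)
  have hpart : ∀ n, ∑ i ∈ Finset.range n, (g i - g (i+1)) = g 0 - g n :=
    fun n => Finset.sum_range_sub' g n
  have hsum : Summable (fun n => g n - g (n+1)) :=
    summable_of_sum_range_le hnneg (fun n => by rw [hpart]; linarith [hnn n])
  rw [hsum.hasSum_iff_tendsto_nat]
  have : Tendsto (fun n => g 0 - g n) atTop (𝓝 (g 0 - 0)) := tendsto_const_nhds.sub hL
  simpa [hpart] using this

lemma hasSum_base : HasSum (fun n : ℕ => cb (n+1)/((n:ℝ)+2)) 1 := by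
  have key : HasSum (fun n : ℕ => 2*cb (n+1) - 2*cb (n+1+1)) (2*cb (0+1)) :=
    hasSum_telescope (g := fun n => 2 * cb (n+1))
      (fun n => by have := cb_anti (n+1); linarith)
      (fun n => by have := cb_pos (n+1); linarith)
      (by
        have : Tendsto (fun n : ℕ => cb (n+1)) atTop (𝓝 0) :=
          cb_tendsto.comp (tendsto_add_atTop_nat 1)
        simpa using this.const_mul 2)
  have h0 : 2*cb (0+1) = 1 := by rw [cb_succ, cb_zero]; norm_num
  have hfe : ∀ n : ℕ, cb (n+1)/((n:ℝ)+2) = 2*cb (n+1) - 2*cb (n+1+1) := by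
    intro n
    rw [cb_succ (n+1)]
    have h2 : ((2:ℝ)*(n+1)+2) ≠ 0 := by positivity
    push_cast
    field_simp
    ring
  rw [h0] at key
  simpa only [← hfe] using key
end TELE
section HSUMS
open Real Finset Filter Topology

lemma hasSum_T (k : ℕ) : HasSum (fun n : ℕ => cb (n+1)/((n:ℝ)+1+((k:ℝ)+1)))
    (1/(((k:ℝ)+1)*cb (k+1)) - 1/((k:ℝ)+1)) := by
  induction k with
  | zero =>
    have h1 : cb 1 = 1/2 := by rw [cb_succ, cb_zero]; norm_num
    have hfe : ∀ n : ℕ, cb (n+1)/((n:ℝ)+1+(((0:ℕ):ℝ)+1)) = cb (n+1)/((n:ℝ)+2) := by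
      intro n; push_cast; ring_nf
    have hv : (1:ℝ)/((((0:ℕ):ℝ)+1)*cb (0+1)) - 1/(((0:ℕ):ℝ)+1) = 1 := by
      rw [show (0:ℕ)+1 = 1 from rfl, h1]; norm_num
    simp only [hfe, hv]
    exact hasSum_base
  | succ k ih =>
    simp only [Nat.cast_add, Nat.cast_one]
    set κ : ℝ := (k:ℝ)+1 with hκ
    have hκpos : 0 < κ := by positivity
    have hcb := cb_pos (k+1)
    have shifted : HasSum (fun n : ℕ => cb (n+1+1)/(((n:ℝ)+1)+1+κ))
        ((1/(κ*cb (k+1)) - 1/κ) - cb 1/(1+κ)) := by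
      have hmain := (hasSum_nat_add_iff
        (f := fun n : ℕ => cb (n+1)/((n:ℝ)+1+κ)) 1
        (g := (1/(κ*cb (k+1)) - 1/κ) - cb 1/(1+κ))).mpr ?_
      · refine hmain.congr_fun fun n => ?_
        push_cast; ring_nf
      · have hs : ∑ i ∈ Finset.range 1, cb (i+1)/((i:ℝ)+1+κ) = cb 1/(1+κ) := by
          rw [Finset.sum_range_one]; norm_num
        rw [hs]
        have heq : (1/(κ*cb (k+1)) - 1/κ) - cb 1/(1+κ) + cb 1/(1+κ) = 1/(κ*cb (k+1)) - 1/κ := by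
          ring
        rw [heq]
        exact ih
    have combo := (shifted.add (hasSum_base.mul_left (1/(2*κ)))).mul_left (2*κ/(2*κ+1))
    have h1 : cb 1 = 1/2 := by rw [cb_succ, cb_zero]; norm_num
    have hterm : ∀ n : ℕ, cb (n+1)/((n:ℝ)+1+(((k:ℝ)+1)+1))
        = (2*κ/(2*κ+1)) * (cb (n+1+1)/(((n:ℝ)+1)+1+κ) + (1/(2*κ))*(cb (n+1)/((n:ℝ)+2))) := by
      intro n
      have hrec : cb (n+1+1) = cb (n+1) * ((2*((n:ℝ)+1)+1)/(2*((n:ℝ)+1)+2)) := by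
        have := cb_succ (n+1); push_cast at this ⊢; exact this
      rw [hrec, hκ]
      have e1 : ((n:ℝ)+1)+1+((k:ℝ)+1) ≠ 0 := by positivity
      have e2 : (n:ℝ)+2 ≠ 0 := by positivity
      have e3 : (2*((n:ℝ)+1)+2) ≠ 0 := by positivity
      have e4 : (k:ℝ)+1 ≠ 0 := by positivity
      have e5 : 2*((k:ℝ)+1)+1 ≠ 0 := by positivity
      have hne := ne_of_gt (cb_pos (n+1))
      field_simp
      ring
    have hval : (2*κ/(2*κ+1)) * ((1/(κ*cb (k+1)) - 1/κ) - cb 1/(1+κ) + (1/(2*κ))*1)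
        = 1/((((k:ℝ)+1)+1)*cb (k+1+1)) - 1/(((k:ℝ)+1)+1) := by
      rw [h1, hκ, cb_succ (k+1)]
      have e4 : (k:ℝ)+1 ≠ 0 := by positivity
      have e5 : 2*((k:ℝ)+1)+1 ≠ 0 := by positivity
      have e6 : (k:ℝ)+2 ≠ 0 := by positivity
      have hne := ne_of_gt hcb
      push_cast
      field_simp
      ring
    rw [hval] at combo
    exact combo.congr_fun hterm

end HSUMS
section HARM
open Real Finset Filter Topology

lemma hasSum_harm (n : ℕ) : HasSum (fun k : ℕ => 1/(((k:ℝ)+1)*((k:ℝ)+1+((n:ℝ)+1))))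
    (H (n+1)/((n:ℝ)+1)) := by
  set N : ℕ := n+1 with hN
  set ν : ℝ := (n:ℝ)+1 with hν
  have hνpos : (0:ℝ) < ν := by positivity
  have hNc : ((N:ℕ):ℝ) = ν := by rw [hN, hν]; push_cast; ring
  set g : ℕ → ℝ := fun k => (1/ν) * ∑ j ∈ Finset.range N, 1/((k:ℝ)+(j:ℝ)+1) with hg
  have hmono : ∀ k, g (k+1) ≤ g k := by
    intro k
    rw [hg]
    dsimp only
    apply mul_le_mul_of_nonneg_left _ (by positivity)
    apply Finset.sum_le_sum
    intro j _
    have h1 : (0:ℝ) < (k:ℝ)+(j:ℝ)+1 := by positivity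
    apply one_div_le_one_div_of_le h1
    push_cast
    linarith
  have hnn : ∀ k, 0 ≤ g k := by
    intro k
    rw [hg]
    dsimp only
    apply mul_nonneg (by positivity)
    apply Finset.sum_nonneg
    intro j _
    positivity
  have hub : ∀ k, g k ≤ 1/((k:ℝ)+1) := by
    intro k
    rw [hg]
    dsimp only
    have hb : ∑ j ∈ Finset.range N, 1/((k:ℝ)+(j:ℝ)+1) ≤ ∑ j ∈ Finset.range N, 1/((k:ℝ)+1) := by
      apply Finset.sum_le_sum
      intro j _
      apply one_div_le_one_div_of_le (by positivity)
      have : (0:ℝ) ≤ (j:ℝ) := Nat.cast_nonneg j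
      linarith
    have hconst : ∑ j ∈ Finset.range N, 1/((k:ℝ)+1) = ν * (1/((k:ℝ)+1)) := by
      rw [Finset.sum_const, Finset.card_range, nsmul_eq_mul, hNc]
    calc (1/ν) * ∑ j ∈ Finset.range N, 1/((k:ℝ)+(j:ℝ)+1)
        ≤ (1/ν) * (ν * (1/((k:ℝ)+1))) := by
          apply mul_le_mul_of_nonneg_left _ (by positivity)
          rw [← hconst]; exact hb
      _ = 1/((k:ℝ)+1) := by field_simp
  have hlim : Tendsto g atTop (𝓝 0) := by
    have h2 : Tendsto (fun k : ℕ => ((k:ℝ)+1)) atTop atTop :=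
      Filter.tendsto_atTop_add_const_right _ _ (tendsto_natCast_atTop_atTop (R := ℝ))
    exact squeeze_zero hnn hub (tendsto_const_nhds.div_atTop h2)
  have hkey := hasSum_telescope hmono hnn hlim
  have hterm : ∀ k : ℕ, g k - g (k+1) = 1/(((k:ℝ)+1)*((k:ℝ)+1+((n:ℝ)+1))) := by
    intro k
    set f : ℕ → ℝ := fun j => 1/((k:ℝ)+(j:ℝ)+1) with hf
    have hgk : g k = (1/ν) * ∑ j ∈ Finset.range N, f j := rfl
    have hsh : g (k+1) = (1/ν) * ∑ j ∈ Finset.range N, f (j+1) := by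
      show (1/ν) * ∑ j ∈ Finset.range N, 1/(((k+1:ℕ):ℝ)+(j:ℝ)+1) = _
      congr 1
      refine Finset.sum_congr rfl fun j _ => ?_
      rw [hf]
      push_cast
      ring_nf
    have htel := Finset.sum_range_sub' f N
    have hf0 : f 0 = 1/((k:ℝ)+1) := by rw [hf]; norm_num
    have hfN : f N = 1/((k:ℝ)+((n:ℝ)+1)+1) := by
      show (1:ℝ)/((k:ℝ)+((N:ℕ):ℝ)+1) = _
      rw [hNc, hν]
    rw [hgk, hsh, ← mul_sub, ← Finset.sum_sub_distrib, htel, hf0, hfN, hν]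
    have e1 : ((k:ℝ)+1) ≠ 0 := by positivity
    have e2 : ((k:ℝ)+1+((n:ℝ)+1)) ≠ 0 := by positivity
    have e3 : ((n:ℝ)+1) ≠ 0 := by positivity
    have e4 : ((k:ℝ)+((n:ℝ)+1)+1) ≠ 0 := by positivity
    field_simp
    ring_nf
    try tauto
  have hval : g 0 = H (n+1)/((n:ℝ)+1) := by
    have : g 0 = (1/ν) * ∑ j ∈ Finset.range N, 1/(((0:ℕ):ℝ)+(j:ℝ)+1) := rfl
    have h2 : ∑ j ∈ Finset.range N, 1/(((0:ℕ):ℝ)+(j:ℝ)+1) = ∑ j ∈ Finset.range N, 1/((j:ℝ)+1) :=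
      Finset.sum_congr rfl fun j _ => by norm_num
    rw [this, h2, H, ← hN, ← hν]
    ring
  rw [hval] at hkey
  exact hkey.congr_fun fun k => (hterm k).symm

end HARM
section JSUMS
open Real Finset Filter Topology

lemma hasSum_Jk (m : ℕ) : HasSum (fun k : ℕ => Jf m (k+1)/((k:ℝ)+1)) (2/(2*(m:ℝ)+1)^2) := by
  set μ : ℝ := 2*(m:ℝ)+1 with hμ
  have hμpos : 0 < μ := by positivity
  have hkey := hasSum_telescope (g := fun k => (2/μ) * Jf m k)
    (fun k => by exact mul_le_mul_of_nonneg_left (Jf_anti_k m k) (by positivity))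
    (fun k => by have := Jf_pos m k; positivity)
    (by simpa using (Jf_tendsto_k m).const_mul (2/μ))
  have h0 : (2/μ) * Jf m 0 = 2/μ^2 := by
    rw [Jf_zero, ← hμ]; field_simp
  have hterm : ∀ k : ℕ, Jf m (k+1)/((k:ℝ)+1) = (2/μ) * Jf m k - (2/μ) * Jf m (k+1) := by
    intro k
    rw [Jf_succ, hμ]
    have e1 : (2*(m:ℝ)+2*(k:ℝ)+3) ≠ 0 := by positivity
    have e2 : ((k:ℝ)+1) ≠ 0 := by positivity
    have e3 : (2*(m:ℝ)+1) ≠ 0 := by positivity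
    field_simp
    ring
  have hkey2 : HasSum (fun n => (2/μ) * Jf m n - (2/μ) * Jf m (n+1)) ((2/μ) * Jf m 0) := hkey
  rw [h0] at hkey2
  exact hkey2.congr_fun hterm

lemma hasSum_Jm (k : ℕ) : HasSum (fun m : ℕ => Jf m (k+1)) (Jf 0 k) := by
  have hkey := hasSum_telescope (g := fun m => Jf m k)
    (fun m => Jf_anti_m m k) (fun m => (Jf_pos m k).le) (Jf_tendsto_m k)
  exact hkey.congr_fun fun m => Jf_tele_m m k

end JSUMS
section SWAP
open Real Finset Filter Topology

lemma tsum_swap_of_nonneg {f : ℕ → ℕ → ℝ} (hf : ∀ n k, 0 ≤ f n k)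
    {a b : ℕ → ℝ} (ha : ∀ n, HasSum (f n) (a n)) (hb : ∀ k, HasSum (fun n => f n k) (b k))
    (hbs : Summable b) : Summable a ∧ ∑' n, a n = ∑' k, b k := by
  have hann : ∀ n, 0 ≤ a n := fun n => (ha n).nonneg (hf n)
  have hbnn : ∀ k, 0 ≤ b k := fun k => (hb k).nonneg (fun n => hf n k)
  have hrow : ∀ n, (∑' k, ENNReal.ofReal (f n k)) = ENNReal.ofReal (a n) := by
    intro n
    rw [← ENNReal.ofReal_tsum_of_nonneg (hf n) (ha n).summable, (ha n).tsum_eq]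
  have hcol : ∀ k, (∑' n, ENNReal.ofReal (f n k)) = ENNReal.ofReal (b k) := by
    intro k
    rw [← ENNReal.ofReal_tsum_of_nonneg (fun n => hf n k) (hb k).summable, (hb k).tsum_eq]
  have hswap : ∑' n, ENNReal.ofReal (a n) = ∑' k, ENNReal.ofReal (b k) := by
    calc ∑' n, ENNReal.ofReal (a n) = ∑' n, ∑' k, ENNReal.ofReal (f n k) := by
          exact (tsum_congr hrow).symm
      _ = ∑' k, ∑' n, ENNReal.ofReal (f n k) := ENNReal.tsum_comm
      _ = ∑' k, ENNReal.ofReal (b k) := tsum_congr hcol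
  have hbE : ∑' k, ENNReal.ofReal (b k) = ENNReal.ofReal (∑' k, b k) :=
    (ENNReal.ofReal_tsum_of_nonneg hbnn hbs).symm
  have hfin : ∑' n, ENNReal.ofReal (a n) ≠ ⊤ := by
    rw [hswap, hbE]; exact ENNReal.ofReal_ne_top
  have hsa : Summable a := by
    have h := ENNReal.summable_toReal hfin
    exact h.congr fun n => by rw [ENNReal.toReal_ofReal (hann n)]
  refine ⟨hsa, ?_⟩
  have haE : ENNReal.ofReal (∑' n, a n) = ENNReal.ofReal (∑' k, b k) := by
    rw [ENNReal.ofReal_tsum_of_nonneg hann hsa, hswap, hbE]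
  exact (ENNReal.ofReal_eq_ofReal_iff (tsum_nonneg hann) (tsum_nonneg hbnn)).1 haE

lemma summable_invsq : Summable (fun n : ℕ => 1/((n:ℝ)+1)^2) := by
  have := (Real.summable_one_div_nat_pow (p := 2)).2 (by norm_num)
  exact_mod_cast (summable_nat_add_iff 1).2 this

lemma summable_odd4 : Summable (fun m : ℕ => (4:ℝ)/(2*(m:ℝ)+1)^2) := by
  apply Summable.of_nonneg_of_le (fun m => by positivity)
    (f := fun m : ℕ => 4*(1/((m:ℝ)+1)^2))
  · intro m
    rw [div_eq_mul_one_div]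
    apply mul_le_mul_of_nonneg_left _ (by norm_num)
    apply one_div_le_one_div_of_le (by positivity)
    have : (0:ℝ) ≤ (m:ℝ) := Nat.cast_nonneg m
    nlinarith
  · exact summable_invsq.mul_left 4

lemma cb_choose (n : ℕ) : cb n = (Nat.choose (2*n) n : ℝ)/4^n := by
  induction n with
  | zero => simp [cb_zero]
  | succ n ih =>
    have key : ((n:ℝ)+1)^2 * (Nat.choose (2*(n+1)) (n+1) : ℝ)
        = (2*(n:ℝ)+2)*(2*(n:ℝ)+1) * (Nat.choose (2*n) n : ℝ) := by
      have h1 := Nat.add_one_mul_choose_eq (2*n+1) n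
      have h2 := Nat.add_one_mul_choose_eq (2*n) n
      have h3 := Nat.choose_symm_half n
      -- h1 : (2n+2) * C(2n+1, n) = C(2n+2, n+1) * (n+1)
      -- h2 : (2n+1) * C(2n, n) = C(2n+1, n+1) * (n+1)
      -- h3 : C(2n+1, n+1) = C(2n+1, n)
      have hnat : (n+1)*(n+1) * Nat.choose (2*(n+1)) (n+1)
          = (2*n+2)*((2*n+1) * Nat.choose (2*n) n) := by
        rw [h2, h3]
        have h2n : 2*(n+1) = (2*n+1)+1 := by ring
        rw [h2n]
        calc (n+1)*(n+1) * Nat.choose ((2*n+1)+1) (n+1)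
            = (n+1) * (Nat.choose ((2*n+1)+1) (n+1) * (n+1)) := by ring
          _ = (n+1) * ((2*n+2) * Nat.choose (2*n+1) n) := by
              rw [← Nat.add_one_mul_choose_eq (2*n+1) n]
          _ = (2*n+2) * (Nat.choose (2*n+1) n * (n+1)) := by ring
      have := congrArg (fun x : ℕ => (x:ℝ)) hnat
      push_cast at this
      push_cast
      nlinarith [this]
    have e1 : ((n:ℝ)+1) ≠ 0 := by positivity
    have hchoose : (Nat.choose (2*(n+1)) (n+1) : ℝ)
        = (2*(n:ℝ)+2)*(2*(n:ℝ)+1)*(Nat.choose (2*n) n : ℝ)/((n:ℝ)+1)^2 := by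
      rw [eq_div_iff (by positivity)]
      linarith [key]
    rw [cb_succ, ih, hchoose]
    have e2 : (2*(n:ℝ)+2) ≠ 0 := by positivity
    have e3 : ((4:ℝ)^n) ≠ 0 := by positivity
    have e4 : ((4:ℝ)^(n+1)) = 4 * 4^n := by ring
    rw [e4]
    field_simp
    ring

end SWAP
section FINAL
open Real Finset Filter Topology

theorem stmt_4 :
    ∑' n : ℕ, ((Nat.choose (2 * (n + 1)) (n + 1) : ℝ) / 4 ^ (n + 1)) * H (n + 1) / ((n : ℝ) + 1) =
    2 * zval 2 := by
  set E : ℝ := ∑' n : ℕ, 1/((n:ℝ)+1)^2 with hE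
  -- swap 2 : ∑_k (2/(k+1)) Jf 0 k = ∑_m 4/(2m+1)^2
  have swap2 := tsum_swap_of_nonneg
    (f := fun k m => (2/((k:ℝ)+1)) * Jf m (k+1))
    (fun k m => by have := Jf_pos m (k+1); positivity)
    (a := fun k => (2/((k:ℝ)+1)) * Jf 0 k)
    (b := fun m => (4:ℝ)/(2*(m:ℝ)+1)^2)
    (fun k => (hasSum_Jm k).mul_left _)
    (fun m => by
      have h := (hasSum_Jk m).mul_left 2
      have hv : 2 * (2/(2*(m:ℝ)+1)^2) = 4/(2*(m:ℝ)+1)^2 := by ring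
      rw [hv] at h
      exact h.congr_fun fun k => by ring)
    summable_odd4
  obtain ⟨sumD, hDval⟩ := swap2
  -- rewrite b of swap1
  have hDk : ∀ k : ℕ, (1/((k:ℝ)+1)) * (1/(((k:ℝ)+1)*cb (k+1)) - 1/((k:ℝ)+1))
      = (2/((k:ℝ)+1)) * Jf 0 k - 1/((k:ℝ)+1)^2 := by
    intro k
    rw [Jf0_eq]
    have h1 := cb_pos (k+1)
    have e1 : ((k:ℝ)+1) ≠ 0 := by positivity
    have e2 : cb (k+1) ≠ 0 := ne_of_gt h1
    field_simp
  -- swap 1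
  have swap1 := tsum_swap_of_nonneg
    (f := fun n k => cb (n+1) * (1/(((k:ℝ)+1)*((k:ℝ)+1+((n:ℝ)+1)))))
    (fun n k => by have := cb_pos (n+1); positivity)
    (a := fun n => cb (n+1) * (H (n+1)/((n:ℝ)+1)))
    (b := fun k => (1/((k:ℝ)+1)) * (1/(((k:ℝ)+1)*cb (k+1)) - 1/((k:ℝ)+1)))
    (fun n => (hasSum_harm n).mul_left _)
    (fun k => by
      have h := (hasSum_T k).mul_left (1/((k:ℝ)+1))
      refine h.congr_fun fun n => ?_
      have e1 : ((k:ℝ)+1) ≠ 0 := by positivity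
      have e2 : ((k:ℝ)+1+((n:ℝ)+1)) ≠ 0 := by positivity
      have e3 : ((n:ℝ)+1+((k:ℝ)+1)) ≠ 0 := by positivity
      field_simp
      ring)
    (by
      refine (sumD.sub summable_invsq).congr fun k => ?_
      exact (hDk k).symm)
  obtain ⟨sumA, hAval⟩ := swap1
  -- even/odd split
  have hev : Summable (fun k : ℕ => 1/(((2*k:ℕ):ℝ)+1)^2) := by
    apply Summable.of_nonneg_of_le (fun k => by positivity)
      (f := fun k : ℕ => 1/((k:ℝ)+1)^2) _ summable_invsq
    intro k
    apply one_div_le_one_div_of_le (by positivity)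
    have : (0:ℝ) ≤ (k:ℝ) := Nat.cast_nonneg k
    push_cast
    nlinarith
  have hod : Summable (fun k : ℕ => 1/(((2*k+1:ℕ):ℝ)+1)^2) := by
    apply Summable.of_nonneg_of_le (fun k => by positivity)
      (f := fun k : ℕ => 1/((k:ℝ)+1)^2) _ summable_invsq
    intro k
    apply one_div_le_one_div_of_le (by positivity)
    have : (0:ℝ) ≤ (k:ℝ) := Nat.cast_nonneg k
    push_cast
    nlinarith
  have heo := tsum_even_add_odd (f := fun n : ℕ => 1/((n:ℝ)+1)^2) hev hod
  have hodval : ∑' k : ℕ, 1/(((2*k+1:ℕ):ℝ)+1)^2 = E/4 := by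
    have h1 : ∀ k : ℕ, 1/(((2*k+1:ℕ):ℝ)+1)^2 = (1/4) * (1/((k:ℝ)+1)^2) := by
      intro k
      push_cast
      rw [show ((2:ℝ)*(k:ℝ)+1+1)^2 = 4*((k:ℝ)+1)^2 by ring]
      rw [show (4:ℝ)*((k:ℝ)+1)^2 = ((k:ℝ)+1)^2 * 4 by ring]
      rw [one_div, mul_inv]
      ring
    rw [tsum_congr h1, tsum_mul_left, ← hE]
    ring
  have hevval : ∑' k : ℕ, 1/(((2*k:ℕ):ℝ)+1)^2 = E - E/4 := by
    have := heo
    rw [hodval, ← hE] at this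
    linarith
  -- evaluate swap2 RHS
  have hD3E : ∑' k : ℕ, (2/((k:ℝ)+1)) * Jf 0 k = 3 * E := by
    rw [hDval]
    have h1 : ∀ m : ℕ, (4:ℝ)/(2*(m:ℝ)+1)^2 = 4 * (1/(((2*m:ℕ):ℝ)+1)^2) := by
      intro m
      push_cast
      ring
    rw [tsum_congr h1, tsum_mul_left, hevval]
    ring
  -- assemble
  have hterm : ∀ n : ℕ, ((Nat.choose (2 * (n + 1)) (n + 1) : ℝ) / 4 ^ (n + 1)) * H (n + 1) / ((n : ℝ) + 1)
      = cb (n+1) * (H (n+1)/((n:ℝ)+1)) := by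
    intro n
    rw [cb_choose]
    ring
  rw [tsum_congr hterm, hAval, tsum_congr hDk,
    sumD.tsum_sub summable_invsq, hD3E]
  have : ∑' k : ℕ, 1/((k:ℝ)+1)^2 = E := hE.symm
  rw [this]
  have hz : zval 2 = E := by rw [zval, hE]
  rw [hz]
  ring

end FINAL
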